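/- For k even, k ≥ 2, summing over all paths γ in Γ_k (closed ±1-step paths of length k with maximum level 0), the total (negative) signed area ∑_{γ∈Γ_k} ∑_{i<0} i·l_i(γ) equals −k·2^{k−1}, where l_i(γ) is the number of crossings of the path γ with the horizontal line y = i + 1/2. -/

import Mathlib

/-- `γ` is a closed ±1-step path of length `k` whose maximum level is `0`. -/
def IsGammaPath (k : ℕ) (γ : Fin (k + 1) → ℤ) : Prop :=
  γ 0 = γ (Fin.last k) ∧
  (∀ u : Fin k, |γ u.succ - γ u.castSucc| = 1) ∧
  (∀ u, γ u ≤ 0) ∧ (∃ u, γ u = 0)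

/-- Number of crossings of `γ` with the horizontal line `y = i + 1/2`, i.e. the
number of steps `u` with `{γ u, γ (u+1)} = {i, i+1}`. -/
noncomputable def crossCount (k : ℕ) (i : ℤ) (γ : Fin (k + 1) → ℤ) : ℕ :=
  Nat.card {u : Fin k | ({γ u.castSucc, γ u.succ} : Set ℤ) = {i, i + 1}}

namespace Stmt6Aux

/-! ### Walk basics -/

def stp (b : Bool) : ℤ := bif b then 1 else -1

def ps {k : ℕ} (ε : Fin k → Bool) : ℕ → ℤ
  | 0 => 0
  | j + 1 => ps ε j + (if h : j < k then stp (ε ⟨j, h⟩) else 0)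

def mx {k : ℕ} (ε : Fin k → Bool) : ℤ :=
  (Finset.range (k + 1)).sup' (Finset.nonempty_range_iff.2 (Nat.succ_ne_zero k)) (ps ε)

def enc {k : ℕ} (ε : Fin k → Bool) : Fin (k + 1) → ℤ := fun j => ps ε j - mx ε

lemma stp_abs (b : Bool) : |stp b| = 1 := by cases b <;> simp [stp]

lemma stp_not (b : Bool) : stp (!b) = - stp b := by cases b <;> simp [stp]

lemma ps_zero {k : ℕ} (ε : Fin k → Bool) : ps ε 0 = 0 := rfl

lemma ps_succ {k : ℕ} (ε : Fin k → Bool) (u : Fin k) :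
    ps ε (u + 1) = ps ε u + stp (ε u) := by
  simp [ps, u.isLt]

lemma ps_le_mx {k : ℕ} (ε : Fin k → Bool) {j : ℕ} (hj : j ≤ k) : ps ε j ≤ mx ε :=
  Finset.le_sup' _ (Finset.mem_range.2 (Nat.lt_succ_of_le hj))

lemma mx_exists {k : ℕ} (ε : Fin k → Bool) : ∃ j ≤ k, ps ε j = mx ε := by
  obtain ⟨j, hj, h⟩ := Finset.exists_mem_eq_sup'
    (Finset.nonempty_range_iff.2 (Nat.succ_ne_zero k)) (ps ε)
  exact ⟨j, Nat.lt_succ_iff.1 (Finset.mem_range.1 hj), h.symm⟩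

lemma mx_nonneg {k : ℕ} (ε : Fin k → Bool) : 0 ≤ mx ε := ps_le_mx ε (Nat.zero_le k)

lemma step_bound {k : ℕ} (ε : Fin k → Bool) (j : ℕ) :
    |ps ε (j + 1) - ps ε j| ≤ 1 := by
  show |ps ε j + _ - ps ε j| ≤ 1
  split
  · rename_i h; rw [add_sub_cancel_left]; cases ε ⟨j, h⟩ <;> simp [stp]
  · simp

lemma ps_dist {k : ℕ} (ε : Fin k → Bool) (a b : ℕ) (hab : a ≤ b) :
    |ps ε b - ps ε a| ≤ (b : ℤ) - a := by
  induction b with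
  | zero => interval_cases a; simp
  | succ n ih =>
    rcases Nat.lt_or_ge a (n + 1) with h | h
    · have h1 := ih (Nat.lt_succ_iff.1 h)
      have h2 := step_bound ε n
      calc |ps ε (n + 1) - ps ε a| ≤ |ps ε (n + 1) - ps ε n| + |ps ε n - ps ε a| := by
            simpa using abs_sub_le (ps ε (n + 1)) (ps ε n) (ps ε a)
        _ ≤ 1 + ((n : ℤ) - a) := add_le_add h2 h1
        _ ≤ (↑(n + 1) : ℤ) - a := by push_cast; omega
    · have : a = n + 1 := le_antisymm hab h
      subst this; simp

lemma ps_parity {k : ℕ} (ε : Fin k → Bool) (j : ℕ) (hj : j ≤ k) : Even (ps ε j + j) := by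
  induction j with
  | zero => simp [ps]
  | succ n ih =>
    show Even (ps ε n + _ + _)
    rcases ih (Nat.le_of_succ_le hj) with ⟨c, hc⟩
    push_cast
    split
    · rename_i h; cases hε : (ε ⟨n, h⟩) <;> simp only [stp, cond_true, cond_false]
      · exact ⟨c, by omega⟩
      · exact ⟨c + 1, by omega⟩
    · omega

lemma walk_ivt {k : ℕ} (ε : Fin k → Bool) (c : ℤ) (b : ℕ)
    (h0 : ps ε 0 ≤ c) (hb : c ≤ ps ε b) : ∃ t ≤ b, ps ε t = c := by
  induction b with
  | zero => exact ⟨0, le_refl 0, le_antisymm h0 hb⟩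
  | succ n ih =>
    rcases le_or_gt c (ps ε n) with h | h
    · obtain ⟨t, ht, h⟩ := ih h
      exact ⟨t, Nat.le_succ_of_le ht, h⟩
    · have h2 := abs_le.1 (step_bound ε n)
      exact ⟨n + 1, le_refl _, by omega⟩

lemma ps_flip {k : ℕ} (ε : Fin k → Bool) (j : ℕ) :
    ps (fun u => !(ε u)) j = - ps ε j := by
  induction j with
  | zero => simp [ps]
  | succ n ih =>
    show ps _ n + _ = -(ps ε n + _)
    rw [ih]
    split
    · rename_i h; cases hb : ε ⟨n, h⟩ <;> simp [stp, hb] <;> ring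
    · ring

/-! ### Endpoint counting -/

/-- the number of walks with endpoint `s` -/
def cC (k : ℕ) (s : ℤ) : ℕ := (Finset.univ.filter (fun ε : Fin k → Bool => ps ε k = s)).card

/-- balanced walks -/
def Bal (k : ℕ) : Finset (Fin k → Bool) := Finset.univ.filter (fun ε => ps ε k = 0)

lemma cC_neg (k : ℕ) (s : ℤ) : cC k (-s) = cC k s := by
  unfold cC
  apply Finset.card_bij' (fun ε _ => fun u => !(ε u)) (fun ε _ => fun u => !(ε u))
  · intro ε hε
    simp only [Finset.mem_filter, Finset.mem_univ, true_and] at hε ⊢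
    rw [ps_flip, hε, neg_neg]
  · intro ε hε
    simp only [Finset.mem_filter, Finset.mem_univ, true_and] at hε ⊢
    rw [ps_flip, hε]
  · intro ε _; funext u; simp
  · intro ε _; funext u; simp

lemma cC_odd (k : ℕ) (hk : Even k) (s : ℤ) (hs : ¬ Even s) : cC k s = 0 := by
  rw [cC, Finset.card_eq_zero, Finset.filter_eq_empty_iff]
  intro ε _ hps
  rcases ps_parity ε k (le_refl k) with ⟨c, hc⟩
  rcases hk with ⟨d, hd⟩
  exact hs ⟨c - d, by rw [← hps]; push_cast; omega⟩

lemma bal_card (k : ℕ) : cC k 0 = (Bal k).card := rfl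

lemma two_mx_le {k : ℕ} {ε : Fin k → Bool} (hε : ε ∈ Bal k) : 2 * mx ε ≤ k := by
  simp only [Bal, Finset.mem_filter, Finset.mem_univ, true_and] at hε
  obtain ⟨j, hj, hps⟩ := mx_exists ε
  have h1 := abs_le.1 (ps_dist ε 0 j (Nat.zero_le j))
  have h2 := abs_le.1 (ps_dist ε j k hj)
  rw [ps_zero] at h1
  rw [hε] at h2
  have hjk : (j : ℤ) ≤ k := by exact_mod_cast hj
  omega

/-- first hitting time of level `m` -/
noncomputable def tau {k : ℕ} (m : ℤ) (ε : Fin k → Bool) : ℕ := sInf {j | ps ε j = m}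

/-- reflect the walk after the first hitting time of `m` -/
noncomputable def refl {k : ℕ} (m : ℤ) (ε : Fin k → Bool) : Fin k → Bool :=
  fun u => if (u : ℕ) < tau m ε then ε u else !(ε u)

lemma tau_spec {k : ℕ} {m : ℤ} {ε : Fin k → Bool} (h : ∃ j, ps ε j = m) :
    ps ε (tau m ε) = m := Nat.sInf_mem h

lemma tau_min {k : ℕ} {m : ℤ} {ε : Fin k → Bool} {j : ℕ} (h : j < tau m ε) :
    ps ε j ≠ m := Nat.notMem_of_lt_sInf h

lemma tau_le {k : ℕ} {m : ℤ} {ε : Fin k → Bool} {j : ℕ} (h : ps ε j = m) :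
    tau m ε ≤ j := Nat.sInf_le h

lemma refl_ps {k : ℕ} {m : ℤ} {ε : Fin k → Bool} (h : ∃ j, ps ε j = m) (j : ℕ) :
    (j ≤ tau m ε → ps (refl m ε) j = ps ε j) ∧
      (tau m ε ≤ j → ps (refl m ε) j = 2 * m - ps ε j) := by
  induction j with
  | zero =>
    refine ⟨fun _ => rfl, fun h0 => ?_⟩
    have hτ0 : tau m ε = 0 := Nat.le_zero.1 h0
    have hm0 : m = 0 := by
      have h1 := tau_spec h
      rw [hτ0, ps_zero] at h1
      omega
    show (0 : ℤ) = 2 * m - ps ε 0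
    rw [ps_zero, hm0]; ring
  | succ n ih =>
    constructor
    · intro hle
      have hlt : n < tau m ε := hle
      show ps (refl m ε) n + _ = ps ε n + _
      rw [ih.1 (Nat.le_of_succ_le hle)]
      congr 1
      split
      · rename_i hnk
        have : refl m ε ⟨n, hnk⟩ = ε ⟨n, hnk⟩ := by simp [refl, hlt]
        rw [this]
      · rfl
    · intro hge
      rcases Nat.lt_or_ge (tau m ε) (n + 1) with hlt | hge2
      · have hτn : tau m ε ≤ n := Nat.lt_succ_iff.1 hlt
        show ps (refl m ε) n + _ = 2 * m - (ps ε n + _)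
        rw [ih.2 hτn]
        split
        · rename_i hnk
          have : refl m ε ⟨n, hnk⟩ = !(ε ⟨n, hnk⟩) := by
            simp [refl, Nat.not_lt.2 hτn]
          rw [this, stp_not]; ring
        · ring
      · have hτ : tau m ε = n + 1 := le_antisymm hge hge2
        have h1 := (ih.1 (by omega)).trans rfl
        have e1 : ps (refl m ε) (n + 1) = ps ε (n + 1) := by
          show ps (refl m ε) n + _ = ps ε n + _
          rw [ih.1 (by omega)]
          congr 1
          split
          · rename_i hnk
            have : refl m ε ⟨n, hnk⟩ = ε ⟨n, hnk⟩ := by simp [refl, hτ]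
            rw [this]
          · rfl
        have e2 : ps ε (n + 1) = m := by rw [← hτ]; exact tau_spec h
        rw [e1, e2]; ring

lemma tau_refl {k : ℕ} {m : ℤ} {ε : Fin k → Bool} (h : ∃ j, ps ε j = m) :
    tau m (refl m ε) = tau m ε := by
  have hτ : ps (refl m ε) (tau m ε) = m := by
    rw [(refl_ps h (tau m ε)).1 (le_refl _)]; exact tau_spec h
  refine le_antisymm (tau_le hτ) ?_
  by_contra hc
  push_neg at hc
  have h1 : ps (refl m ε) (tau m (refl m ε)) = m := tau_spec ⟨_, hτ⟩
  have h2 : ps (refl m ε) (tau m (refl m ε)) = ps ε (tau m (refl m ε)) :=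
    (refl_ps h _).1 (le_of_lt hc)
  exact tau_min hc (h2 ▸ h1)

lemma refl_refl {k : ℕ} {m : ℤ} {ε : Fin k → Bool} (h : ∃ j, ps ε j = m) :
    refl m (refl m ε) = ε := by
  funext u
  simp only [refl, tau_refl h]
  split <;> simp

/-- reflection principle -/
lemma refl_card (k : ℕ) (m : ℤ) (hm : 0 ≤ m) :
    ((Bal k).filter (fun ε => m ≤ mx ε)).card = cC k (2 * m) := by
  classical
  have hexA : ∀ ε : Fin k → Bool, ε ∈ (Bal k).filter (fun ε => m ≤ mx ε) →
      (∃ j, ps ε j = m) ∧ tau m ε ≤ k := by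
    intro ε hε
    simp only [Finset.mem_filter, Bal, Finset.mem_univ, true_and] at hε
    obtain ⟨j0, hj0, hps0⟩ := mx_exists ε
    obtain ⟨t, ht, hpst⟩ := walk_ivt ε m j0 (by rw [ps_zero]; exact hm)
      (by rw [hps0]; exact hε.2)
    exact ⟨⟨t, hpst⟩, le_trans (tau_le hpst) (le_trans ht hj0)⟩
  have hexB : ∀ δ : Fin k → Bool, δ ∈ Finset.univ.filter (fun δ : Fin k → Bool => ps δ k = 2 * m) →
      (∃ j, ps δ j = m) ∧ tau m δ ≤ k := by
    intro δ hδ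
    simp only [Finset.mem_filter, Finset.mem_univ, true_and] at hδ
    obtain ⟨t, ht, hpst⟩ := walk_ivt δ m k (by rw [ps_zero]; exact hm) (by rw [hδ]; omega)
    exact ⟨⟨t, hpst⟩, le_trans (tau_le hpst) ht⟩
  rw [cC]
  apply Finset.card_bij' (fun ε _ => refl m ε) (fun δ _ => refl m δ)
  · intro ε hε
    obtain ⟨hex, hτk⟩ := hexA ε hε
    simp only [Finset.mem_filter, Bal, Finset.mem_univ, true_and] at hε ⊢
    rw [(refl_ps hex k).2 (le_trans hτk (le_refl k)), hε.1]
    ring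
  · intro δ hδ
    obtain ⟨hex, hτk⟩ := hexB δ hδ
    simp only [Finset.mem_filter, Finset.mem_univ, true_and] at hδ
    simp only [Finset.mem_filter, Bal, Finset.mem_univ, true_and]
    constructor
    · rw [(refl_ps hex k).2 hτk, hδ]; ring
    · have : ps (refl m δ) (tau m δ) = m := by
        rw [(refl_ps hex (tau m δ)).1 (le_refl _)]; exact tau_spec hex
      calc m = ps (refl m δ) (tau m δ) := this.symm
        _ ≤ mx (refl m δ) := ps_le_mx _ hτk
  · intro ε hε; exact refl_refl (hexA ε hε).1
  · intro δ hδ; exact refl_refl (hexB δ hδ).1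

def dD (k n : ℕ) : ℕ := cC k ((n : ℤ) - k)

lemma ps_k_bound {k : ℕ} (ε : Fin k → Bool) : |ps ε k| ≤ (k : ℤ) := by
  have := ps_dist ε 0 k (Nat.zero_le k)
  rw [ps_zero] at this
  simpa using this

lemma dD_total (k : ℕ) : ∑ n ∈ Finset.range (2 * k + 1), dD k n = 2 ^ k := by
  classical
  have h := Finset.card_eq_sum_card_fiberwise
    (f := fun ε : Fin k → Bool => (ps ε k + k).toNat)
    (s := Finset.univ) (t := Finset.range (2 * k + 1)) ?_
  · have huniv : (Finset.univ : Finset (Fin k → Bool)).card = 2 ^ k := by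
      simp [Finset.card_univ]
    rw [huniv] at h
    rw [h]
    apply Finset.sum_congr rfl
    intro n _
    rw [dD, cC]
    congr 1
    apply Finset.filter_congr
    intro ε _
    have hb := abs_le.1 (ps_k_bound ε)
    constructor
    · intro he; omega
    · intro he; omega
  · intro ε _
    show (ps ε k + (k : ℤ)).toNat ∈ Finset.range (2 * k + 1)
    have hb := abs_le.1 (ps_k_bound ε)
    rw [Finset.mem_range]
    omega

lemma dD_symm (k : ℕ) (n : ℕ) (hn : n ≤ 2 * k) : dD k (2 * k - n) = dD k n := by
  rw [dD, dD]
  have : ((2 * k - n : ℕ) : ℤ) - k = -(((n : ℤ) - k)) := by push_cast [hn]; ring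
  rw [this, cC_neg]

lemma layer_cake (n : ℕ) (x : ℤ) (h0 : 0 ≤ x) (hn : x ≤ (n : ℤ)) :
    ∑ m ∈ Finset.Icc 1 n, (if (m : ℤ) ≤ x then (1 : ℤ) else 0) = x := by
  classical
  rw [Finset.sum_boole]
  have hf : ((Finset.Icc 1 n : Finset ℕ)).filter (fun m : ℕ => (m : ℤ) ≤ x)
      = (Finset.Icc 1 x.toNat : Finset ℕ) := by
    ext m
    simp only [Finset.mem_filter, Finset.mem_Icc]
    omega
  rw [hf, Nat.card_Icc]
  omega

/-- the master counting identity -/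
lemma sum_mx (k : ℕ) (hk : Even k) :
    ((Bal k).card : ℤ) + 2 * ∑ ε ∈ Bal k, mx ε = 2 ^ k := by
  classical
  obtain ⟨d, hd⟩ := hk
  -- Step 1: the layer-cake for the sum of maxima
  have step1 : ∑ ε ∈ Bal k, mx ε
      = ∑ m ∈ Finset.Icc 1 (k / 2), (((Bal k).filter (fun ε => (m : ℤ) ≤ mx ε)).card : ℤ) := by
    have : ∀ ε ∈ Bal k, mx ε
        = ∑ m ∈ Finset.Icc 1 (k / 2), (if (m : ℤ) ≤ mx ε then (1 : ℤ) else 0) := by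
      intro ε hε
      rw [layer_cake (k / 2) (mx ε) (mx_nonneg ε)]
      have := two_mx_le hε
      omega
    rw [Finset.sum_congr rfl this, Finset.sum_comm]
    apply Finset.sum_congr rfl
    intro m _
    rw [Finset.sum_boole]
  -- Step 2: reflection principle pointwise
  have step2 : ∀ m ∈ Finset.Icc 1 (k / 2),
      (((Bal k).filter (fun ε => (m : ℤ) ≤ mx ε)).card : ℤ) = (dD k (k + 2 * m) : ℤ) := by
    intro m hm
    rw [refl_card k m (by positivity)]
    rw [dD]
    congr 2
    push_cast
    ring
  -- Step 3: splitting the total count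
  have htot := dD_total k
  have hsplit : ∑ n ∈ Finset.range (2 * k + 1), dD k n
      = (∑ n ∈ Finset.range k, dD k n) + dD k k
        + ∑ n ∈ Finset.Ico (k + 1) (2 * k + 1), dD k n := by
    rw [Finset.range_eq_Ico,
      ← Finset.sum_Ico_consecutive (fun n => dD k n) (Nat.zero_le (k + 1)) (by omega),
      ← Finset.range_eq_Ico, Finset.sum_range_succ]
  have hsym : ∑ n ∈ Finset.Ico (k + 1) (2 * k + 1), dD k n
      = ∑ n ∈ Finset.range k, dD k n := by
    apply Finset.sum_nbij' (fun n => 2 * k - n) (fun n => 2 * k - n)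
    · intro n hn
      rw [Finset.mem_Ico] at hn
      rw [Finset.mem_range]
      omega
    · intro n hn
      rw [Finset.mem_range] at hn
      rw [Finset.mem_Ico]
      omega
    · intro n hn
      rw [Finset.mem_Ico] at hn
      omega
    · intro n hn
      rw [Finset.mem_range] at hn
      omega
    · intro n hn
      rw [Finset.mem_Ico] at hn
      rw [dD_symm k n (by omega)]
  have himg : ∑ m ∈ Finset.Icc 1 (k / 2), dD k (k + 2 * m)
      = ∑ n ∈ (Finset.Icc 1 (k / 2)).image (fun m => k + 2 * m), dD k n :=
    (Finset.sum_image (by intro a _ b _ h; simp only at h; omega)).symm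
  have hreindex : ∑ n ∈ Finset.Ico (k + 1) (2 * k + 1), dD k n
      = ∑ m ∈ Finset.Icc 1 (k / 2), dD k (k + 2 * m) := by
    rw [himg]
    symm
    apply Finset.sum_subset
    · intro n hn
      rw [Finset.mem_image] at hn
      obtain ⟨m, hm, rfl⟩ := hn
      rw [Finset.mem_Icc] at hm
      rw [Finset.mem_Ico]
      omega
    · intro n hn hnim
      rw [Finset.mem_Ico] at hn
      by_cases hpar : Even n
      · exfalso
        obtain ⟨c, hc⟩ := hpar
        apply hnim
        rw [Finset.mem_image]
        exact ⟨c - d, by rw [Finset.mem_Icc]; omega, by omega⟩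
      · apply cC_odd k ⟨d, hd⟩
        intro hev
        apply hpar
        have : Even ((n : ℤ)) := by
          rcases hev with ⟨c, hc⟩
          exact ⟨c + d, by push_cast at hc ⊢; omega⟩
        exact_mod_cast this
  have hDk : dD k k = (Bal k).card := by
    rw [dD, sub_self, bal_card]
  -- assemble
  have key : (Bal k).card + 2 * ∑ m ∈ Finset.Icc 1 (k / 2), dD k (k + 2 * m) = 2 ^ k := by
    omega
  rw [step1, Finset.sum_congr rfl step2]
  exact_mod_cast key


/-! ### The encoding of paths -/

lemma enc_step {k : ℕ} (ε : Fin k → Bool) (u : Fin k) :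
    |enc ε u.succ - enc ε u.castSucc| = 1 := by
  simp only [enc, Fin.val_succ, Fin.coe_castSucc]
  have := ps_succ ε u
  rw [show ((u : ℕ) + 1) = (u : ℕ) + 1 from rfl, this]
  rw [show ps ε u + stp (ε u) - mx ε - (ps ε u - mx ε) = stp (ε u) by ring]
  exact stp_abs _

lemma isGamma_enc {k : ℕ} {ε : Fin k → Bool} (hε : ε ∈ Bal k) :
    IsGammaPath k (enc ε) := by
  simp only [Bal, Finset.mem_filter, Finset.mem_univ, true_and] at hε
  refine ⟨?_, enc_step ε, ?_, ?_⟩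
  · simp only [enc, Fin.val_zero, Fin.val_last, ps_zero, hε]
  · intro u
    simp only [enc]
    have := ps_le_mx ε (Nat.lt_succ_iff.1 u.isLt)
    omega
  · obtain ⟨j, hj, hps⟩ := mx_exists ε
    exact ⟨⟨j, Nat.lt_succ_of_le hj⟩, by simp only [enc]; omega⟩

lemma stp_inj : Function.Injective stp := by
  intro a b h
  cases a <;> cases b <;> simp [stp] at h ⊢

lemma enc_inj {k : ℕ} : Function.Injective (enc (k := k)) := by
  intro ε ε' h
  have h0 : mx ε = mx ε' := by
    have := congrFun h 0
    simp only [enc, Fin.val_zero, ps_zero] at this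
    omega
  have hps : ∀ j, j ≤ k → ps ε j = ps ε' j := by
    intro j hj
    have := congrFun h ⟨j, Nat.lt_succ_of_le hj⟩
    simp only [enc] at this
    omega
  funext u
  apply stp_inj
  have h1 := ps_succ ε u
  have h2 := ps_succ ε' u
  have h3 := hps u (le_of_lt u.isLt)
  have h4 := hps (u + 1) u.isLt
  omega

lemma gamma_eq_image (k : ℕ) :
    {γ : Fin (k + 1) → ℤ | IsGammaPath k γ} = ↑((Bal k).image enc) := by
  ext γ
  simp only [Set.mem_setOf_eq, Finset.coe_image, Set.mem_image, Finset.mem_coe]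
  constructor
  · intro hγ
    obtain ⟨hclosed, hstep, hle, hex⟩ := hγ
    set ε : Fin k → Bool := fun u => decide (γ u.castSucc < γ u.succ) with hemark
    have hd : ∀ u : Fin k, γ u.succ - γ u.castSucc = stp (ε u) := by
      intro u
      have h3 := (abs_eq (by norm_num)).1 (hstep u)
      rcases h3 with h3 | h3
      · have : ε u = true := by rw [hemark]; simp only [decide_eq_true_iff]; omega
        rw [this]; rw [h3]; rfl
      · have : ε u = false := by rw [hemark]; simp only [decide_eq_false_iff_not]; omega
        rw [this]; rw [h3]; rfl
    have hkey : ∀ j, (hj : j ≤ k) → ps ε j = γ ⟨j, Nat.lt_succ_of_le hj⟩ - γ 0 := by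
      intro j
      induction j with
      | zero =>
        intro hj
        rw [ps_zero]
        have : (⟨0, Nat.lt_succ_of_le hj⟩ : Fin (k + 1)) = 0 := by
          apply Fin.ext; simp
        rw [this]; ring
      | succ n ih =>
        intro hj
        have hn : n < k := hj
        have e1 : ps ε (n + 1) = ps ε n + stp (ε ⟨n, hn⟩) := ps_succ ε ⟨n, hn⟩
        rw [e1, ih (Nat.le_of_succ_le hj), ← hd ⟨n, hn⟩]
        have ec : (⟨n, hn⟩ : Fin k).castSucc = ⟨n, Nat.lt_succ_of_le (Nat.le_of_succ_le hj)⟩ := by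
          apply Fin.ext; simp
        have es : (⟨n, hn⟩ : Fin k).succ = ⟨n + 1, Nat.lt_succ_of_le hj⟩ := by
          apply Fin.ext; simp
        rw [ec, es]; ring
    have hbal : ps ε k = 0 := by
      rw [hkey k (le_refl k)]
      have : (⟨k, Nat.lt_succ_of_le (le_refl k)⟩ : Fin (k + 1)) = Fin.last k := by
        apply Fin.ext; simp
      rw [this, ← hclosed]; ring
    have hmx : mx ε = -γ 0 := by
      apply le_antisymm
      · obtain ⟨j, hj, hps⟩ := mx_exists ε
        rw [← hps, hkey j hj]
        have := hle ⟨j, Nat.lt_succ_of_le hj⟩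
        omega
      · obtain ⟨u0, hu0⟩ := hex
        have := ps_le_mx ε (Nat.lt_succ_iff.1 u0.isLt)
        rw [hkey u0 (Nat.lt_succ_iff.1 u0.isLt)] at this
        have heq : (⟨(u0 : ℕ), Nat.lt_succ_of_le (Nat.lt_succ_iff.1 u0.isLt)⟩ : Fin (k + 1)) = u0 := by
          apply Fin.ext; simp
        rw [heq, hu0] at this
        omega
    refine ⟨ε, ?_, ?_⟩
    · simp only [Bal, Finset.mem_filter, Finset.mem_univ, true_and]
      exact hbal
    · funext u
      simp only [enc, hmx]
      rw [hkey u (Nat.lt_succ_iff.1 u.isLt)]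
      have heq : (⟨(u : ℕ), Nat.lt_succ_of_le (Nat.lt_succ_iff.1 u.isLt)⟩ : Fin (k + 1)) = u := by
        apply Fin.ext; simp
      rw [heq]; ring
  · rintro ⟨ε, hε, rfl⟩
    exact isGamma_enc hε

/-! ### The crossing-count computation -/

lemma pair_min {a b i : ℤ} (h : |b - a| = 1) :
    (({a, b} : Set ℤ) = {i, i + 1}) ↔ min a b = i := by
  have h1 := min_le_left a b
  have h2 := min_le_right a b
  have h3 := min_choice a b
  rcases (abs_eq (by norm_num)).1 h with h | h
  · constructor
    · intro hs
      have ha : a ∈ ({i, i + 1} : Set ℤ) := hs ▸ Set.mem_insert a {b}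
      have hb : b ∈ ({i, i + 1} : Set ℤ) := hs ▸ Set.mem_insert_of_mem a rfl
      simp only [Set.mem_insert_iff, Set.mem_singleton_iff] at ha hb
      omega
    · intro hm
      have hai : a = i := by omega
      have hbi : b = i + 1 := by omega
      rw [hai, hbi]
  · constructor
    · intro hs
      have ha : a ∈ ({i, i + 1} : Set ℤ) := hs ▸ Set.mem_insert a {b}
      have hb : b ∈ ({i, i + 1} : Set ℤ) := hs ▸ Set.mem_insert_of_mem a rfl
      simp only [Set.mem_insert_iff, Set.mem_singleton_iff] at ha hb
      omega
    · intro hm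
      have hai : a = i + 1 := by omega
      have hbi : b = i := by omega
      rw [hai, hbi, Set.pair_comm]

lemma crossCount_eq {k : ℕ} {γ : Fin (k + 1) → ℤ}
    (hstep : ∀ u : Fin k, |γ u.succ - γ u.castSucc| = 1) (i : ℤ) :
    crossCount k i γ
      = (Finset.univ.filter (fun u : Fin k => min (γ u.castSucc) (γ u.succ) = i)).card := by
  classical
  rw [crossCount]
  have hset : {u : Fin k | ({γ u.castSucc, γ u.succ} : Set ℤ) = {i, i + 1}}
      = {u : Fin k | min (γ u.castSucc) (γ u.succ) = i} := by
    ext u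
    exact pair_min (hstep u)
  rw [hset]
  rw [Nat.card_eq_fintype_card]
  convert Fintype.card_subtype (p := fun u : Fin k => min (γ u.castSucc) (γ u.succ) = i) using 2
  rfl

lemma inner_sum {k : ℕ} {γ : Fin (k + 1) → ℤ} (hγ : IsGammaPath k γ) :
    (∑ᶠ i ∈ {i : ℤ | i < 0}, i * (crossCount k i γ : ℤ))
      = ∑ u : Fin k, min (γ u.castSucc) (γ u.succ) := by
  classical
  obtain ⟨-, hstep, hle, -⟩ := hγ
  set f : Fin k → ℤ := fun u => min (γ u.castSucc) (γ u.succ) with hf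
  have hfneg : ∀ u, f u < 0 := by
    intro u
    have h1 := hle u.castSucc
    have h2 := hle u.succ
    have h3 := (abs_eq (by norm_num)).1 (hstep u)
    have h4 : f u ≤ γ u.castSucc := min_le_left _ _
    have h5 : f u ≤ γ u.succ := min_le_right _ _
    have h6 : f u = γ u.castSucc ∨ f u = γ u.succ := min_choice _ _
    rcases h6 with h6 | h6 <;> omega
  set T : Finset ℤ := Finset.univ.image f with hT
  have h1 : ∑ᶠ i ∈ {i : ℤ | i < 0}, i * (crossCount k i γ : ℤ)
      = ∑ i ∈ T, i * (crossCount k i γ : ℤ) := by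
    apply finsum_mem_eq_sum_of_subset
    · intro i hi
      obtain ⟨-, hi2⟩ := hi
      rw [Function.mem_support] at hi2
      have : crossCount k i γ ≠ 0 := by
        intro h0
        rw [h0] at hi2
        simp at hi2
      rw [crossCount_eq hstep i] at this
      obtain ⟨u, hu⟩ := Finset.card_ne_zero.1 this
      rw [Finset.mem_filter] at hu
      rw [hT, Finset.mem_coe, Finset.mem_image]
      exact ⟨u, Finset.mem_univ u, hu.2⟩
    · intro i hi
      simp only [hT, Finset.coe_image, Set.mem_image] at hi
      obtain ⟨u, -, rfl⟩ := hi
      exact hfneg u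
  rw [h1]
  have h2 : ∀ i ∈ T, i * (crossCount k i γ : ℤ)
      = (Finset.univ.filter (fun u : Fin k => f u = i)).card • i := by
    intro i _
    rw [crossCount_eq hstep i, nsmul_eq_mul, mul_comm]
  rw [Finset.sum_congr rfl h2]
  exact (Finset.sum_comp (id : ℤ → ℤ) f).symm

lemma two_min {a b : ℤ} (h : |b - a| = 1) : 2 * min a b = a + b - 1 := by
  have h1 := min_le_left a b
  have h2 := min_le_right a b
  have h3 := min_choice a b
  have h4 := (abs_eq (by norm_num : (0:ℤ) ≤ 1)).1 h
  rcases h3 with h3 | h3 <;> omega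

lemma twoG {k : ℕ} {ε : Fin k → Bool} (hε : ε ∈ Bal k) :
    2 * (∑ u : Fin k, min (enc ε u.castSucc) (enc ε u.succ))
      = 2 * (∑ j ∈ Finset.range k, ps ε j) - (2 * mx ε + 1) * k := by
  have hbal : ps ε k = 0 := by
    simpa only [Bal, Finset.mem_filter, Finset.mem_univ, true_and] using hε
  have hterm : ∀ u : Fin k, 2 * min (enc ε u.castSucc) (enc ε u.succ)
      = ps ε u + ps ε ((u : ℕ) + 1) - 2 * mx ε - 1 := by
    intro u
    rw [two_min (enc_step ε u)]
    simp only [enc, Fin.val_succ, Fin.coe_castSucc]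
    ring
  rw [Finset.mul_sum, Finset.sum_congr rfl (fun u _ => hterm u)]
  have e1 : ∑ u : Fin k, (ps ε u + ps ε ((u : ℕ) + 1) - 2 * mx ε - 1)
      = (∑ u : Fin k, ps ε u) + (∑ u : Fin k, ps ε ((u : ℕ) + 1))
        - (2 * mx ε + 1) * k := by
    rw [Finset.sum_sub_distrib, Finset.sum_sub_distrib, Finset.sum_add_distrib]
    simp [Finset.card_univ, mul_comm]
    ring
  rw [e1]
  have e2 : ∑ u : Fin k, ps ε (u : ℕ) = ∑ j ∈ Finset.range k, ps ε j :=
    Fin.sum_univ_eq_sum_range (fun j => ps ε j) k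
  have e3 : ∑ u : Fin k, ps ε ((u : ℕ) + 1) = ∑ j ∈ Finset.range k, ps ε j := by
    rw [Fin.sum_univ_eq_sum_range (fun j => ps ε (j + 1)) k]
    have := Finset.sum_range_succ' (fun j => ps ε j) k
    rw [Finset.sum_range_succ] at this
    rw [ps_zero, hbal] at this
    omega
  rw [e2, e3]
  ring

lemma sumA (k : ℕ) (hk : 1 ≤ k) :
    ∑ ε ∈ Bal k, (∑ j ∈ Finset.range k, ps ε j) = 0 := by
  apply Finset.sum_involution (g := fun ε _ => fun u => !(ε u))
  · intro ε hε
    rw [← Finset.sum_add_distrib]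
    apply Finset.sum_eq_zero
    intro j _
    rw [ps_flip]
    ring
  · intro ε hε _
    intro hcontra
    have := congrFun hcontra ⟨0, hk⟩
    simp at this
  · intro ε hε
    simp only [Bal, Finset.mem_filter, Finset.mem_univ, true_and] at hε ⊢
    rw [ps_flip, hε, neg_zero]
  · intro ε hε
    funext u
    simp

end Stmt6Aux

theorem stmt6 (k : ℕ) (hk : Even k) (h2 : 2 ≤ k) :
    ∑ᶠ γ ∈ {γ : Fin (k + 1) → ℤ | IsGammaPath k γ},
        ∑ᶠ i ∈ {i : ℤ | i < 0}, i * (crossCount k i γ : ℤ)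
      = -(k : ℤ) * 2 ^ (k - 1) := by
  classical
  open Stmt6Aux in
  rw [gamma_eq_image k, finsum_mem_coe_finset, Finset.sum_image
    (fun ε _ ε' _ h => enc_inj h)]
  rw [Finset.sum_congr rfl (fun ε hε => inner_sum (isGamma_enc hε))]
  apply mul_left_cancel₀ (two_ne_zero (α := ℤ))
  rw [Finset.mul_sum, Finset.sum_congr rfl (fun ε hε => twoG hε)]
  rw [Finset.sum_sub_distrib, ← Finset.mul_sum, sumA k (by omega), ← Finset.sum_mul,
    Finset.sum_add_distrib, ← Finset.mul_sum, Finset.sum_const, nsmul_eq_mul, mul_one]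
  have hmaster := sum_mx k hk
  have hpow : (2 : ℤ) * 2 ^ (k - 1) = 2 ^ k := by
    rw [← pow_succ']
    congr 1
    omega
  linear_combination (-(k : ℤ)) * hmaster + (k : ℤ) * hpow
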